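/- Let G = (V₁, V₂; E) be an edge-colored bipartite graph with |V₁| = n₁ and |V₂| = n₂, and let t ≥ s ≥ 2 be integers. If Σ_{v ∈ V(G)} d^c(v) > n₁n₂ + σ_{s,t}(n₁·n₂^{1−1/s} + n₂·n₁^{1−1/s}) + s(n₁ + n₂), where σ_{s,t} = s((t−1)/(s−1)!)^{1/s}, then G contains a properly colored K_{s,t}. -/

import Mathlib

open Finset

lemma aux_pow_le_desc (d s : ℕ) : (d - (s - 1)) ^ s ≤ s.factorial * d.choose s := by
  calc (d - (s - 1)) ^ s = ∏ _i ∈ Finset.range s, (d - (s - 1)) := by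
        rw [Finset.prod_const, Finset.card_range]
    _ ≤ ∏ i ∈ Finset.range s, (d - i) := by
        refine Finset.prod_le_prod' fun i hi => ?_
        have : i ≤ s - 1 := by
          have := Finset.mem_range.mp hi; omega
        omega
    _ = d.descFactorial s := (Nat.descFactorial_eq_prod_range d s).symm
    _ = s.factorial * d.choose s := Nat.descFactorial_eq_factorial_mul_choose d s

lemma aux_desc_le_pow (n s : ℕ) : s.factorial * n.choose s ≤ n ^ s := by
  rw [← Nat.descFactorial_eq_factorial_mul_choose]
  exact Nat.descFactorial_le_pow n s

/-- One-sided rainbow selection: a subrelation `L ⊆ E` such that at each left vertex the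
`L`-edges have pairwise distinct colors, and the number of `L`-edges at each left vertex equals
its color degree. -/
lemma aux_sel {α β C : Type*} (E : α → β → Prop) (c : α → β → C) :
    ∃ L : α → β → Prop,
      (∀ a b, L a b → E a b) ∧
      (∀ a b b', L a b → L a b' → c a b = c a b' → b = b') ∧
      (∀ a, {b | L a b}.ncard = ((fun b => c a b) '' {b | E a b}).ncard) := by
  classical
  by_cases hβ : Nonempty β
  · set g : α → C → β := fun a γ =>
      if h : ∃ b, E a b ∧ c a b = γ then h.choose else Classical.arbitrary β with hg
    have hgspec : ∀ a γ, (∃ b, E a b ∧ c a b = γ) → E a (g a γ) ∧ c a (g a γ) = γ := by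
      intro a γ h
      simp only [hg, dif_pos h]
      exact h.choose_spec
    refine ⟨fun a b => E a b ∧ g a (c a b) = b, fun a b hb => hb.1, ?_, ?_⟩
    · intro a b b' hb hb' hc
      rw [← hb.2, ← hb'.2, hc]
    · intro a
      have hinj : Set.InjOn (fun b => c a b) {b | E a b ∧ g a (c a b) = b} := by
        intro b hb b' hb' hc
        simp only [Set.mem_setOf_eq] at hb hb'
        rw [← hb.2, ← hb'.2]; simp only [hc]
      have himg : (fun b => c a b) '' {b | E a b ∧ g a (c a b) = b}
          = (fun b => c a b) '' {b | E a b} := by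
        apply Set.Subset.antisymm
        · exact Set.image_mono fun b hb => hb.1
        · rintro γ ⟨b, hb, rfl⟩
          have h : ∃ b', E a b' ∧ c a b' = c a b := ⟨b, hb, rfl⟩
          obtain ⟨hE, hc⟩ := hgspec a (c a b) h
          exact ⟨g a (c a b), ⟨hE, by rw [hc]⟩, hc⟩
      rw [← himg, Set.ncard_image_of_injOn hinj]
  · refine ⟨fun _ _ => False, by simp, by simp, fun a => ?_⟩
    have h1 : {b : β | False} = ∅ := by simp
    have h2 : {b : β | E a b} = ∅ := by
      ext b; exact absurd ⟨b⟩ hβ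
    simp [h1, h2]

/-- Kővári–Sós–Turán-type pigeonhole: if the number of `s`-stars exceeds
`k * C(|β|, s)`, some `s`-set in `β` has more than `k` common neighbors. -/
lemma aux_kst {α β : Type*} [Fintype α] [Fintype β] [DecidableEq β]
    (F : α → β → Prop) [∀ a b, Decidable (F a b)] (k s : ℕ)
    (h : k * (Fintype.card β).choose s <
      ∑ a : α, ((Finset.univ.filter (fun b => F a b)).card.choose s)) :
    ∃ B : Finset β, B.card = s ∧
      k < (Finset.univ.filter (fun a => ∀ b ∈ B, F a b)).card := by
  classical
  by_contra hc
  push_neg at hc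
  set P : Finset (Finset β) := Finset.univ.powersetCard s with hP
  have key : ∀ a : α, (Finset.univ.filter (fun b => F a b)).card.choose s
      = ∑ B ∈ P, if (∀ b ∈ B, F a b) then 1 else 0 := by
    intro a
    rw [← Finset.card_powersetCard]
    rw [← Finset.card_filter]
    congr 1
    ext B
    simp only [Finset.mem_powersetCard, Finset.mem_filter, hP, Finset.subset_univ, true_and,
      Finset.subset_iff, Finset.mem_filter, Finset.mem_univ, true_and]
    tauto
  have htot : ∑ a : α, ((Finset.univ.filter (fun b => F a b)).card.choose s)
      = ∑ B ∈ P, (Finset.univ.filter (fun a => ∀ b ∈ B, F a b)).card := by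
    simp only [key]
    rw [Finset.sum_comm]
    refine Finset.sum_congr rfl fun B _ => ?_
    rw [Finset.card_filter]
  have hle : ∑ B ∈ P, (Finset.univ.filter (fun a => ∀ b ∈ B, F a b)).card ≤ P.card * k := by
    calc ∑ B ∈ P, (Finset.univ.filter (fun a => ∀ b ∈ B, F a b)).card
        ≤ ∑ _B ∈ P, k :=
          Finset.sum_le_sum fun B hB => hc B (Finset.mem_powersetCard.mp hB).2
      _ = P.card * k := by rw [Finset.sum_const, smul_eq_mul]
  have hPcard : P.card = (Fintype.card β).choose s := by
    rw [hP, Finset.card_powersetCard, Finset.card_univ]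
  rw [htot] at h
  rw [hPcard, mul_comm] at hle
  omega

set_option maxHeartbeats 1000000 in
theorem stmt_12 (n₁ n₂ s t : ℕ) (hs : 2 ≤ s) (hst : s ≤ t) {C : Type*}
    (E : Fin n₁ → Fin n₂ → Prop) (c : Fin n₁ → Fin n₂ → C)
    (hsum : (((∑ u : Fin n₁, ((fun v => c u v) '' {v | E u v}).ncard) +
        (∑ v : Fin n₂, ((fun u => c u v) '' {u | E u v}).ncard) : ℕ) : ℝ) >
      (n₁ : ℝ) * n₂ +
        (s : ℝ) * (((t : ℝ) - 1) / (Nat.factorial (s - 1))) ^ ((1 : ℝ) / s) *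
          ((n₁ : ℝ) * (n₂ : ℝ) ^ (1 - 1 / (s : ℝ)) + (n₂ : ℝ) * (n₁ : ℝ) ^ (1 - 1 / (s : ℝ))) +
        (s : ℝ) * ((n₁ : ℝ) + (n₂ : ℝ))) :
    ∃ (A : Finset (Fin n₁)) (B : Finset (Fin n₂)),
      ((A.card = s ∧ B.card = t) ∨ (A.card = t ∧ B.card = s)) ∧
      (∀ a ∈ A, ∀ b ∈ B, E a b) ∧
      (∀ a ∈ A, ∀ b ∈ B, ∀ b' ∈ B, b ≠ b' → c a b ≠ c a b') ∧
      (∀ b ∈ B, ∀ a ∈ A, ∀ a' ∈ A, a ≠ a' → c a b ≠ c a' b) := by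
  classical
  have ht2 : 2 ≤ t := le_trans hs hst
  obtain ⟨L, hLE, hLinj, hLcard0⟩ := aux_sel E c
  obtain ⟨R, hRE, hRinj, hRcard0⟩ :=
    aux_sel (fun (v : Fin n₂) (u : Fin n₁) => E u v) (fun v u => c u v)
  have hLcard : ∀ u, {v | L u v}.ncard = ((fun v => c u v) '' {v | E u v}).ncard := hLcard0
  have hRcard : ∀ v, {u | R v u}.ncard = ((fun u => c u v) '' {u | E u v}).ncard := hRcard0
  set F : Fin n₁ → Fin n₂ → Prop := fun u v => L u v ∧ R v u with hF
  set d : Fin n₁ → ℕ := fun u => (Finset.univ.filter (fun v => F u v)).card with hd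
  set Lf : Finset (Fin n₁ × Fin n₂) := Finset.univ.filter (fun p => L p.1 p.2) with hLf
  set Rf : Finset (Fin n₁ × Fin n₂) := Finset.univ.filter (fun p => R p.2 p.1) with hRf
  set Ff : Finset (Fin n₁ × Fin n₂) := Finset.univ.filter (fun p => F p.1 p.2) with hFf
  have hsetL : ∀ u : Fin n₁, {v | L u v}.ncard = (Finset.univ.filter (fun v => L u v)).card := by
    intro u
    rw [show {v | L u v} = ↑(Finset.univ.filter (fun v => L u v)) by ext v; simp,
      Set.ncard_coe_finset]
  have hsetR : ∀ v : Fin n₂, {u | R v u}.ncard = (Finset.univ.filter (fun u => R v u)).card := by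
    intro v
    rw [show {u | R v u} = ↑(Finset.univ.filter (fun u => R v u)) by ext u; simp,
      Set.ncard_coe_finset]
  have hLfcard : Lf.card = ∑ u : Fin n₁, ((fun v => c u v) '' {v | E u v}).ncard := by
    rw [hLf, Finset.card_filter, Fintype.sum_prod_type]
    refine Finset.sum_congr rfl fun u _ => ?_
    rw [← hLcard u, hsetL u, Finset.card_filter]
  have hRfcard : Rf.card = ∑ v : Fin n₂, ((fun u => c u v) '' {u | E u v}).ncard := by
    rw [hRf, Finset.card_filter, Fintype.sum_prod_type, Finset.sum_comm]
    refine Finset.sum_congr rfl fun v _ => ?_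
    rw [← hRcard v, hsetR v, Finset.card_filter]
  have hFfcard : Ff.card = ∑ u : Fin n₁, d u := by
    rw [hFf, Finset.card_filter, Fintype.sum_prod_type]
    refine Finset.sum_congr rfl fun u _ => ?_
    simp only [hd, Finset.card_filter]
  have hFLR : Ff = Lf ∩ Rf := by
    ext p; simp [hLf, hRf, hFf, hF]
  have hU : (Lf ∪ Rf).card ≤ n₁ * n₂ := by
    refine le_trans (Finset.card_le_univ _) ?_
    simp [Finset.card_univ]
  have hinter : Ff.card + (Lf ∪ Rf).card = Lf.card + Rf.card := by
    rw [hFLR]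
    have := Finset.card_union_add_card_inter Lf Rf
    omega
  -- basic positivity facts
  set σ : ℝ := (s : ℝ) * (((t : ℝ) - 1) / (Nat.factorial (s - 1))) ^ ((1 : ℝ) / s) with hσdef
  have hq0 : (0:ℝ) ≤ ((t : ℝ) - 1) / (Nat.factorial (s - 1)) := by
    apply div_nonneg
    · have : (2:ℝ) ≤ t := by exact_mod_cast ht2
      linarith
    · positivity
  have hσ0 : 0 ≤ σ := by
    rw [hσdef]
    exact mul_nonneg (by positivity) (Real.rpow_nonneg hq0 _)
  have hxp0 : (0:ℝ) ≤ (n₁ : ℝ) ^ (1 - 1 / (s:ℝ)) := Real.rpow_nonneg (by positivity) _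
  have hyp0 : (0:ℝ) ≤ (n₂ : ℝ) ^ (1 - 1 / (s:ℝ)) := Real.rpow_nonneg (by positivity) _
  -- main edge count bound
  have hE1 : ((Ff.card : ℝ)) >
      σ * ((n₂:ℝ) * (n₁:ℝ) ^ (1 - 1/(s:ℝ))) + (s:ℝ) * n₁ + (s:ℝ) * n₂ := by
    rw [← hLfcard, ← hRfcard] at hsum
    have h1 : ((Ff.card : ℝ)) + (Lf ∪ Rf).card = (Lf.card : ℝ) + Rf.card := by
      exact_mod_cast congrArg (Nat.cast : ℕ → ℝ) hinter
    have h2 : ((Lf ∪ Rf).card : ℝ) ≤ (n₁:ℝ) * n₂ := by exact_mod_cast hU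
    have h3 : (0:ℝ) ≤ σ * ((n₁:ℝ) * (n₂:ℝ) ^ (1 - 1/(s:ℝ))) :=
      mul_nonneg hσ0 (mul_nonneg (by positivity) hyp0)
    push_cast at hsum
    linarith
  have hcardle : ((Ff.card : ℝ)) ≤ (n₁:ℝ) * n₂ := by
    have := Finset.card_le_univ Ff
    simp only [Finset.card_univ, Fintype.card_prod, Fintype.card_fin] at this
    exact_mod_cast this
  have hsreal : (2:ℝ) ≤ (s:ℝ) := by exact_mod_cast hs
  have hσterm : (0:ℝ) ≤ σ * ((n₂:ℝ) * (n₁:ℝ) ^ (1 - 1/(s:ℝ))) :=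
    mul_nonneg hσ0 (mul_nonneg (by positivity) hxp0)
  have hn₁ : 0 < n₁ := by
    rcases Nat.eq_zero_or_pos n₁ with h | h
    · exfalso
      subst h
      have h4 : (0:ℝ) ≤ (s:ℝ) * (n₂:ℝ) := by positivity
      simp only [Nat.cast_zero, zero_mul, mul_zero] at hE1 hcardle
      linarith
    · exact h
  have hn₂ : 0 < n₂ := by
    rcases Nat.eq_zero_or_pos n₂ with h | h
    · exfalso
      subst h
      have h4 : (0:ℝ) ≤ (s:ℝ) * (n₁:ℝ) := by positivity
      simp only [Nat.cast_zero, zero_mul, mul_zero] at hE1 hcardle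
      linarith
    · exact h
  have hx : (0:ℝ) < n₁ := by exact_mod_cast hn₁
  have hy : (0:ℝ) < n₂ := by exact_mod_cast hn₂
  have hs0 : (0:ℝ) < (s:ℝ) := by positivity
  -- rpow algebra
  have hps : (1 - 1/(s:ℝ)) * s = ((s - 1 : ℕ) : ℝ) := by
    have : ((s - 1 : ℕ) : ℝ) = (s:ℝ) - 1 := by
      have : 1 ≤ s := by omega
      push_cast [Nat.cast_sub this]
      ring
    rw [this]
    field_simp
  have hxp : ((n₁:ℝ) ^ (1 - 1/(s:ℝ))) ^ s = (n₁:ℝ) ^ (s - 1 : ℕ) := by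
    rw [← Real.rpow_natCast ((n₁:ℝ) ^ (1 - 1/(s:ℝ))) s, ← Real.rpow_mul (le_of_lt hx), hps,
      Real.rpow_natCast]
  have hσpow : σ ^ s = (s:ℝ)^s * (((t : ℝ) - 1) / (Nat.factorial (s - 1))) := by
    rw [hσdef, mul_pow, ← Real.rpow_natCast ((((t : ℝ) - 1) / (Nat.factorial (s - 1))) ^ ((1:ℝ)/s)) s,
      ← Real.rpow_mul hq0]
    rw [show (1:ℝ)/s * s = 1 by field_simp]
    rw [Real.rpow_one]
  have hfacpos : (0:ℝ) < (s.factorial : ℝ) := by positivity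
  have hσs : (t:ℝ) - 1 ≤ σ ^ s := by
    rw [hσpow]
    have hfac : ((s-1).factorial : ℝ) ≤ (s:ℝ)^s := by
      have h1 : (s-1).factorial ≤ s ^ s :=
        le_trans (Nat.factorial_le (by omega)) (Nat.factorial_le_pow s)
      exact_mod_cast h1
    have hf0 : (0:ℝ) < ((s-1).factorial : ℝ) := by positivity
    rw [mul_div_assoc'] at *
    rw [le_div_iff₀ hf0]
    have ht1 : (0:ℝ) ≤ (t:ℝ) - 1 := by
      have : (2:ℝ) ≤ t := by exact_mod_cast ht2
      linarith
    nlinarith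
  -- the counting inequality over ℝ
  have hnat : (t-1) * (n₂.choose s) < ∑ u : Fin n₁, (d u).choose s := by
    have ht1c : ((t - 1 : ℕ) : ℝ) = (t:ℝ) - 1 := by
      push_cast [Nat.cast_sub (by omega : 1 ≤ t)]; ring
    have hs1c : ((s - 1 : ℕ) : ℝ) = (s:ℝ) - 1 := by
      push_cast [Nat.cast_sub (by omega : 1 ≤ s)]; ring
    rw [← Nat.cast_lt (α := ℝ)]
    push_cast [ht1c]
    set e : ℝ := (Ff.card : ℝ) with he
    have hesum : e = ∑ u : Fin n₁, (d u : ℝ) := by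
      rw [he]
      exact_mod_cast congrArg (Nat.cast : ℕ → ℝ) hFfcard
    set a : Fin n₁ → ℝ := fun u => ((d u - (s-1) : ℕ) : ℝ) with ha
    have ha0 : ∀ u ∈ Finset.univ, (0:ℝ) ≤ a u := fun u _ => Nat.cast_nonneg _
    have haged : ∀ u : Fin n₁, (d u:ℝ) - ((s:ℝ)-1) ≤ a u := by
      intro u
      have h2 : (d u:ℝ) ≤ ((d u - (s-1) : ℕ):ℝ) + ((s-1 : ℕ):ℝ) := by
        exact_mod_cast (by omega : d u ≤ (d u - (s-1)) + (s-1))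
      rw [hs1c] at h2
      rw [ha]
      linarith
    have hasum : e - ((s:ℝ)-1) * n₁ ≤ ∑ u : Fin n₁, a u := by
      have h1 : ∑ u : Fin n₁, ((d u:ℝ) - ((s:ℝ)-1)) ≤ ∑ u : Fin n₁, a u :=
        Finset.sum_le_sum fun u _ => haged u
      rw [Finset.sum_sub_distrib, Finset.sum_const, Finset.card_univ, Fintype.card_fin] at h1
      rw [hesum]
      rw [nsmul_eq_mul] at h1
      linarith
    set E0 : ℝ := σ * ((n₂:ℝ) * (n₁:ℝ) ^ (1 - 1/(s:ℝ))) with hE0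
    have hE0nn : 0 ≤ E0 := hσterm
    have hgap : E0 < e - ((s:ℝ)-1) * n₁ := by
      have h4 : (0:ℝ) ≤ (s:ℝ) * (n₂:ℝ) := by positivity
      rw [hE0, he]
      nlinarith [hE1]
    have hjen := pow_sum_div_card_le_sum_pow (s := Finset.univ) (f := a) ha0 (s-1)
    rw [show s - 1 + 1 = s by omega, Finset.card_univ, Fintype.card_fin] at hjen
    have hup : ∀ u : Fin n₁, a u ^ s ≤ (s.factorial : ℝ) * ((d u).choose s : ℝ) := by
      intro u
      simp only [ha]
      exact_mod_cast aux_pow_le_desc (d u) s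
    have hsum2 : ∑ u : Fin n₁, a u ^ s ≤ (s.factorial:ℝ) * ∑ u : Fin n₁, ((d u).choose s : ℝ) := by
      rw [Finset.mul_sum]
      exact Finset.sum_le_sum fun u _ => hup u
    have hxpow : (0:ℝ) < ((n₁:ℕ):ℝ) ^ (s-1) := by positivity
    have hE0s : ((t:ℝ) - 1) * ((s.factorial:ℝ) * (n₂.choose s:ℝ)) * ((n₁:ℝ))^(s-1) ≤ E0^s := by
      rw [hE0, mul_pow, mul_pow (n₂:ℝ) ((n₁:ℝ) ^ (1 - 1/(s:ℝ))) s, hxp]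
      have hy2 : (s.factorial:ℝ) * ((n₂.choose s):ℝ) ≤ (n₂:ℝ)^s := by
        exact_mod_cast aux_desc_le_pow n₂ s
      have ht1 : (0:ℝ) ≤ (t:ℝ) - 1 := by
        have : (2:ℝ) ≤ t := by exact_mod_cast ht2
        linarith
      have h5 : ((t:ℝ) - 1) * ((s.factorial:ℝ) * (n₂.choose s:ℝ)) ≤ σ^s * (n₂:ℝ)^s := by
        have h6 : (0:ℝ) ≤ (s.factorial:ℝ) * (n₂.choose s:ℝ) := by positivity
        have h7 : (0:ℝ) ≤ σ ^ s := pow_nonneg hσ0 s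
        nlinarith
      have h8 : (0:ℝ) ≤ (n₁:ℝ)^(s-1) := by positivity
      nlinarith
    have hlt : E0 ^ s < (∑ u : Fin n₁, a u) ^ s := by
      apply pow_lt_pow_left₀ (lt_of_lt_of_le hgap hasum) hE0nn
      omega
    -- combine
    have hdiv : ((t:ℝ) - 1) * ((s.factorial:ℝ) * (n₂.choose s:ℝ)) <
        ∑ u : Fin n₁, a u ^ s := by
      have h9 : ((t:ℝ) - 1) * ((s.factorial:ℝ) * (n₂.choose s:ℝ)) <
          (∑ u : Fin n₁, a u) ^ s / ((n₁:ℝ))^(s-1) := by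
        rw [lt_div_iff₀ hxpow]
        calc ((t:ℝ) - 1) * ((s.factorial:ℝ) * (n₂.choose s:ℝ)) * ((n₁:ℝ))^(s-1)
            ≤ E0^s := hE0s
          _ < (∑ u : Fin n₁, a u) ^ s := hlt
      exact lt_of_lt_of_le h9 hjen
    have hfinal : ((t:ℝ) - 1) * ((n₂.choose s:ℝ)) < ∑ u : Fin n₁, ((d u).choose s : ℝ) := by
      have h10 : (s.factorial:ℝ) * (((t:ℝ) - 1) * (n₂.choose s:ℝ)) <
          (s.factorial:ℝ) * ∑ u : Fin n₁, ((d u).choose s : ℝ) := by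
        calc (s.factorial:ℝ) * (((t:ℝ) - 1) * (n₂.choose s:ℝ))
            = ((t:ℝ) - 1) * ((s.factorial:ℝ) * (n₂.choose s:ℝ)) := by ring
          _ < ∑ u : Fin n₁, a u ^ s := hdiv
          _ ≤ _ := hsum2
      exact lt_of_mul_lt_mul_left h10 (le_of_lt hfacpos)
    exact hfinal
  have hnat' : (t-1) * (Fintype.card (Fin n₂)).choose s <
      ∑ u : Fin n₁, ((Finset.univ.filter (fun v => F u v)).card.choose s) := by
    rw [Fintype.card_fin]
    exact hnat
  obtain ⟨B, hBcard, hBcount⟩ := aux_kst F (t-1) s hnat'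
  obtain ⟨A, hAsub, hAcard⟩ := Finset.exists_subset_card_eq
    (le_trans (by omega : t ≤ t - 1 + 1) (Nat.succ_le_of_lt hBcount))
  have hmem : ∀ a ∈ A, ∀ b ∈ B, F a b := by
    intro a ha b hb
    have h := hAsub ha
    simp only [Finset.mem_filter] at h
    exact h.2 b hb
  refine ⟨A, B, Or.inr ⟨hAcard, hBcard⟩, ?_, ?_, ?_⟩
  · exact fun a ha b hb => hLE a b (hmem a ha b hb).1
  · intro a ha b hb b' hb' hne hceq
    exact hne (hLinj a b b' (hmem a ha b hb).1 (hmem a ha b' hb').1 hceq)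
  · intro b hb a ha a' ha' hne hceq
    exact hne (hRinj b a a' (hmem a ha b hb).2 (hmem a' ha' b hb).2 hceq)
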